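/- Fix i ∈ I and assume λ_0(i) ∈ ℤ_{≥0}. If the generic tuple of monic polynomials y = (y_j)_{j∈I} represents a critical point, then there exists a polynomial Y ∈ ℂ[x] satisfying the Wronskian equation y_i·Y′ − y_i′·Y = x^{λ_0(i)}·T_i(x)·∏_{j ≠ i} y_j(x)^{−a_{ij}} (note that −a_{ij} ≥ 0 for j ≠ i, so the right-hand side is a polynomial). Equivalently, the function y_i^{(i)}(x) := y_i(x)·∫^x ξ^{λ_0(i)} T_i(ξ) ∏_{j∈I} y_j(ξ)^{−a_{ij}} dξ is a polynomial. -/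

import Mathlib

open Polynomial

noncomputable section

section Aux
open Finset
namespace S15aux

/-- polynomial antiderivative -/
def pint (p : ℂ[X]) : ℂ[X] := ∑ n ∈ p.support, C (p.coeff n / (n+1)) * X^(n+1)

lemma derivative_pint (p : ℂ[X]) : derivative (pint p) = p := by
  rw [pint, derivative_sum]
  conv_rhs => rw [p.as_sum_support_C_mul_X_pow]
  refine Finset.sum_congr rfl fun n _ => ?_
  rw [derivative_C_mul, derivative_X_pow, Nat.add_sub_cancel, ← mul_assoc, ← C_mul]
  push_cast
  rw [div_mul_cancel₀ _ (Nat.cast_add_one_ne_zero n (R := ℂ))]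

lemma eval_derivative_prod_finset {β : Type} (s : Finset β) (f : β → ℂ[X]) (t : ℂ) (L : β → ℂ)
    (h : ∀ b ∈ s, eval t (derivative (f b)) = eval t (f b) * L b) :
    eval t (derivative (∏ b ∈ s, f b)) = eval t (∏ b ∈ s, f b) * ∑ b ∈ s, L b := by
  classical
  induction s using Finset.induction_on with
  | empty => simp
  | @insert a s ha ih =>
    rw [Finset.prod_insert ha, Finset.sum_insert ha, derivative_mul]
    rw [eval_add, eval_mul, eval_mul, eval_mul,
      h a (Finset.mem_insert_self a s), ih (fun b hb => h b (Finset.mem_insert_of_mem hb))]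
    ring

lemma eval_derivative_pow (f : ℂ[X]) (n : ℕ) (t : ℂ) (L : ℂ)
    (h : eval t (derivative f) = eval t f * L) :
    eval t (derivative (f ^ n)) = eval t (f ^ n) * ((n : ℂ) * L) := by
  cases n with
  | zero => simp
  | succ m =>
    rw [derivative_pow, eval_mul, eval_mul, eval_C, eval_pow, h, eval_pow,
      Nat.add_sub_cancel, pow_succ]
    push_cast; ring

lemma eval_derivative_multiset (s : Multiset ℂ) (t : ℂ) (h : ∀ r ∈ s, r ≠ t) :
    eval t (derivative (s.map (fun r => X - C r)).prod) =
      eval t (s.map (fun r => X - C r)).prod * (s.map fun r => (t - r)⁻¹).sum := by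
  induction s using Multiset.induction_on with
  | empty => simp
  | cons r s ih =>
    have hr : t - r ≠ 0 := sub_ne_zero.2 fun he => (h r (Multiset.mem_cons_self r s)) he.symm
    rw [Multiset.map_cons, Multiset.prod_cons, Multiset.map_cons, Multiset.sum_cons,
      derivative_mul, eval_add, eval_mul, eval_mul, eval_mul,
      ih (fun r' hr' => h r' (Multiset.mem_cons_of_mem hr'))]
    simp only [derivative_sub, derivative_X, derivative_C, sub_zero, eval_one, eval_sub,
      eval_X, eval_C]
    field_simp

lemma eval_derivative_monic (q : ℂ[X]) (hq : q.Monic) (t : ℂ) (h : eval t q ≠ 0) :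
    eval t (derivative q) = eval t q * (q.roots.map fun r => (t - r)⁻¹).sum := by
  have hsplit := (IsAlgClosed.splits q).eq_prod_roots_of_monic hq
  have hall : ∀ r ∈ q.roots, r ≠ t := by
    intro r hr he
    exact h (he ▸ (isRoot_of_mem_roots hr))
  have h2 := eval_derivative_multiset q.roots t hall
  rw [← hsplit] at h2
  exact h2

lemma coprime_eval_ne_zero {p q : ℂ[X]} (h : IsCoprime p q) {t : ℂ} (hp : eval t p = 0) :
    eval t q ≠ 0 := by
  obtain ⟨u, v, huv⟩ := h
  intro hq
  have := congrArg (eval t) huv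
  simp [hp, hq] at this

lemma dvd_of_roots (y g : ℂ[X]) (hm : y.Monic) (hsf : Squarefree y)
    (h : ∀ t ∈ y.roots, eval t g = 0) : y ∣ g := by
  classical
  have hnodup : y.roots.Nodup := nodup_roots (PerfectField.separable_iff_squarefree.2 hsf)
  have hsplit := (IsAlgClosed.splits y).eq_prod_roots_of_monic hm
  have hval : y.roots.toFinset.val = y.roots := by
    rw [Multiset.toFinset_val, hnodup.dedup]
  have hy2 : y = ∏ r ∈ y.roots.toFinset, (X - C r) := by
    rw [Finset.prod_eq_multiset_prod, hval, ← hsplit]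
  rw [hy2]
  refine Finset.prod_dvd_of_coprime ?_ ?_
  · intro u hu v hv huv
    exact pairwise_coprime_X_sub_C (Function.injective_id) huv
  · intro r hr
    rw [dvd_iff_isRoot]
    exact h r (Multiset.mem_toFinset.1 hr)

lemma wronskian_solvable (y P : ℂ[X]) (hm : y.Monic) (hsf : Squarefree y)
    (hd : ∀ t ∈ y.roots, eval t (derivative P) * eval t (derivative y) =
      eval t P * eval t (derivative (derivative y))) :
    ∃ Y : ℂ[X], y * derivative Y - derivative y * Y = P := by
  classical
  have hy' : ∀ t ∈ y.roots, eval t (derivative y) ≠ 0 := by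
    intro t ht
    exact coprime_eval_ne_zero
      (PerfectField.separable_iff_squarefree.2 hsf : IsCoprime y (derivative y))
      (isRoot_of_mem_roots ht)
  set Y0 : ℂ[X] := Lagrange.interpolate y.roots.toFinset id
    (fun t => - eval t P / eval t (derivative y)) with hY0def
  have hY0 : ∀ t ∈ y.roots, eval t Y0 = - eval t P / eval t (derivative y) := by
    intro t ht
    exact Lagrange.eval_interpolate_at_node _ (Set.injOn_id _) (Multiset.mem_toFinset.2 ht)
  set W : ℂ[X] := y * derivative Y0 - derivative y * Y0 with hWdef
  have hroot : ∀ t ∈ y.roots, eval t y = 0 := fun t ht => isRoot_of_mem_roots ht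
  have h1 : y ∣ (P - W) := by
    refine dvd_of_roots _ _ hm hsf fun t ht => ?_
    have h0 := hroot t ht
    have hyne := hy' t ht
    rw [eval_sub, hWdef, eval_sub, eval_mul, eval_mul, h0, hY0 t ht, zero_mul]
    field_simp
    ring
  obtain ⟨Q, hQ⟩ := h1
  have h2 : y ∣ Q := by
    refine dvd_of_roots _ _ hm hsf fun t ht => ?_
    have h0 := hroot t ht
    have hdQ := congrArg (fun p => eval t (derivative p)) hQ
    simp only [derivative_sub, derivative_mul, eval_sub, eval_add, eval_mul, h0,
      zero_mul, add_zero, zero_add, hWdef] at hdQ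
    -- hdQ : P'(t) - (y'(t)Y0'(t) + ... ) = y'(t) Q(t)
    have hY0t := hY0 t ht
    have hyne := hy' t ht
    have hd' := hd t ht
    -- from hdQ : eval t (derivative P) - (eval t (derivative y) * eval t (derivative Y0) +
    --   ... ) = eval t (derivative y) * eval t Q
    have : eval t (derivative y) * eval t Q =
        eval t (derivative P) + eval t (derivative (derivative y)) * eval t Y0 := by
      rw [← hdQ]; ring
    rw [hY0t] at this
    have h3 : eval t (derivative y) * eval t Q * eval t (derivative y) = 0 := by
      rw [this]
      field_simp
      linear_combination hd'
    rcases mul_eq_zero.1 h3 with h4 | h4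
    · rcases mul_eq_zero.1 h4 with h5 | h5
      · exact absurd h5 hyne
      · exact h5
    · exact absurd h4 hyne
  obtain ⟨R, hR⟩ := h2
  refine ⟨Y0 + y * pint R, ?_⟩
  rw [derivative_add, derivative_mul, derivative_pint]
  linear_combination (-1 : ℂ[X]) * hQ - y * hR

end S15aux


end Aux

variable {I : Type} [Fintype I] [DecidableEq I]

/-- T_i(x) = ∏_{s=1}^N ∏_{k=0}^{M−1} (x − ω^k z_s)^{λ_s(σ^{−k} i)}. -/
def Tpoly (σ : Equiv.Perm I) (M : ℕ) {N : ℕ} (ω : ℂ) (z : Fin N → ℂ)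
    (lam : Fin N → I → ℕ) (i : I) : Polynomial ℂ :=
  ∏ s, ∏ k ∈ Finset.range M, (X - C (ω ^ k * z s)) ^ (lam s ((σ⁻¹ ^ k) i))

/-- A generic tuple of monic polynomials: for each i the roots of y_i are simple and
nonzero, and y_i shares no root with T_i nor with any y_j (j ≠ i) with a_{ij} ≠ 0. -/
def GenericTuple (a : I → I → ℤ) (σ : Equiv.Perm I) (M : ℕ) {N : ℕ} (ω : ℂ)
    (z : Fin N → ℂ) (lam : Fin N → I → ℕ) (y : I → Polynomial ℂ) : Prop :=
  ∀ i, (y i).Monic ∧ Squarefree (y i) ∧ (y i).eval 0 ≠ 0 ∧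
    IsCoprime (y i) (Tpoly σ M ω z lam i) ∧
    ∀ j, j ≠ i → a i j ≠ 0 → IsCoprime (y i) (y j)

open Classical in
/-- S_j(t) = Σ_{t' root of y_j, t' ≠ t} 1/(t − t'). -/
def Sres (y : I → Polynomial ℂ) (j : I) (t : ℂ) : ℂ :=
  (((y j).roots.filter (fun t' => t' ≠ t)).map fun t' => (t - t')⁻¹).sum

/-- A generic tuple y represents a critical point of the extended master function:
the Bethe equations hold at every root of every y_i. -/
def RepCrit (a : I → I → ℤ) (σ : Equiv.Perm I) (M : ℕ) {N : ℕ} (ω : ℂ) (z : Fin N → ℂ)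
    (lam : Fin N → I → ℕ) (lam0 : I → ℂ) (y : I → Polynomial ℂ) : Prop :=
  GenericTuple a σ M ω z lam y ∧
  ∀ i, ∀ t ∈ (y i).roots,
    (∑ k ∈ Finset.range M, ∑ s, ((lam s ((σ⁻¹ ^ k) i) : ℕ) : ℂ) / (t - ω ^ k * z s)) +
      lam0 i / t - (∑ j, ((a i j : ℤ) : ℂ) * Sres y j t) = 0

/-- The tuple y is cyclotomic: y_{σj}(ωx) = ω^{deg y_j} y_j(x) for all j. -/
def CycTupleGen (σ : Equiv.Perm I) (ω : ℂ) (y : I → Polynomial ℂ) : Prop :=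
  ∀ j, (y (σ j)).comp (C ω * X) = C (ω ^ (y j).natDegree) * y j

lemma logderiv_linear_pow (c t : ℂ) (e : ℕ) (h : (t - c) ^ e ≠ 0) :
    eval t (derivative ((X - C c) ^ e)) = eval t ((X - C c) ^ e) * ((e : ℂ) * (t - c)⁻¹) := by
  cases e with
  | zero => simp
  | succ m =>
    have hc : t - c ≠ 0 := by
      intro h0
      exact h (by rw [h0]; simp)
    apply S15aux.eval_derivative_pow
    simp only [derivative_sub, derivative_X, derivative_C, sub_zero, eval_one, eval_sub,
      eval_X, eval_C]
    field_simp

/-- Proposition 4.3: if λ_0(i) ∈ ℤ_{≥0} and the generic tuple y represents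
a critical point, then the Wronskian equation
  y_i·Y′ − y_i′·Y = x^{λ_0(i)}·T_i·∏_{j≠i} y_j^{−a_{ij}}
has a polynomial solution Y (i.e. y_i^{(i)} is a polynomial). -/
theorem statement15
    (a : I → I → ℤ) (σ : Equiv.Perm I) (M : ℕ) (ω : ℂ)
    {N : ℕ} (z : Fin N → ℂ) (lam : Fin N → I → ℕ) (lam0 : I → ℂ)
    (haii : ∀ i, a i i = 2)
    (haneg : ∀ i j, i ≠ j → a i j ≤ 0)
    (hazero : ∀ i j, i ≠ j → (a i j = 0 ↔ a j i = 0))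
    (hasym : ∀ i j, a (σ i) (σ j) = a i j)
    (hM : 0 < M) (hσM : σ ^ M = 1) (hω : IsPrimitiveRoot ω M)
    (hz0 : ∀ s, z s ≠ 0)
    (hzdisj : ∀ s t : Fin N, s ≠ t → ∀ k l : ℕ, ω ^ k * z s ≠ ω ^ l * z t)
    (hlam0σ : ∀ i, lam0 (σ i) = lam0 i)
    (i : I) (n0 : ℕ) (hn0 : lam0 i = (n0 : ℂ))
    (y : I → Polynomial ℂ)
    (hy : RepCrit a σ M ω z lam lam0 y) :
    ∃ Y : Polynomial ℂ,
      y i * derivative Y - derivative (y i) * Y =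
        X ^ n0 * Tpoly σ M ω z lam i *
          ∏ j ∈ Finset.univ.erase i, (y j) ^ ((-(a i j)).toNat) := by
  classical
  obtain ⟨hgen, hbethe⟩ := hy
  obtain ⟨hmon, hsf, h00, hcopT, hcopy⟩ := hgen i
  apply S15aux.wronskian_solvable _ _ hmon hsf
  intro t ht
  have hyt : eval t (y i) = 0 := isRoot_of_mem_roots ht
  have ht0 : t ≠ 0 := fun h => h00 (h ▸ hyt)
  have hTt : eval t (Tpoly σ M ω z lam i) ≠ 0 := S15aux.coprime_eval_ne_zero hcopT hyt
  -- nonvanishing of each linear factor of T at t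
  have hTfac : ∀ s : Fin N, ∀ k ∈ Finset.range M,
      (t - ω ^ k * z s) ^ (lam s ((σ⁻¹ ^ k) i)) ≠ 0 := by
    have h1 := hTt
    rw [Tpoly] at h1
    simp only [eval_prod, eval_pow, eval_sub, eval_X, eval_C, Finset.prod_ne_zero_iff] at h1
    intro s k hk
    exact h1 s (Finset.mem_univ s) k hk
  -- log derivative of T
  have hB : eval t (derivative (Tpoly σ M ω z lam i)) =
      eval t (Tpoly σ M ω z lam i) *
        ∑ s : Fin N, ∑ k ∈ Finset.range M,
          ((lam s ((σ⁻¹ ^ k) i) : ℕ) : ℂ) * (t - ω ^ k * z s)⁻¹ := by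
    rw [Tpoly]
    apply S15aux.eval_derivative_prod_finset
    intro s _
    apply S15aux.eval_derivative_prod_finset
    intro k hk
    exact logderiv_linear_pow _ _ _ (hTfac s k hk)
  -- log derivative of the product over j ≠ i
  have hC : eval t (derivative (∏ j ∈ Finset.univ.erase i, (y j) ^ ((-(a i j)).toNat))) =
      eval t (∏ j ∈ Finset.univ.erase i, (y j) ^ ((-(a i j)).toNat)) *
        ∑ j ∈ Finset.univ.erase i, (((-(a i j)).toNat : ℕ) : ℂ) * Sres y j t := by
    apply S15aux.eval_derivative_prod_finset
    intro j hj
    by_cases hm0 : (-(a i j)).toNat = 0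
    · simp [hm0]
    · have haij : a i j ≠ 0 := by
        intro h
        simp [h] at hm0
      have hji : j ≠ i := (Finset.mem_erase.1 hj).1
      have hyj : eval t (y j) ≠ 0 := S15aux.coprime_eval_ne_zero (hcopy j hji haij) hyt
      have hS : eval t (derivative (y j)) = eval t (y j) * Sres y j t := by
        have h1 := S15aux.eval_derivative_monic (y j) (hgen j).1 t hyj
        have hfil : (y j).roots.filter (fun t' => t' ≠ t) = (y j).roots :=
          Multiset.filter_eq_self.2 (fun r hr he => hyj (he ▸ isRoot_of_mem_roots hr))
        rw [Sres, hfil]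
        exact h1
      exact S15aux.eval_derivative_pow _ _ _ _ hS
  -- log derivative of X ^ n0
  have hA : eval t (derivative (X ^ n0 : ℂ[X])) =
      eval t (X ^ n0 : ℂ[X]) * ((n0 : ℂ) * t⁻¹) := by
    cases n0 with
    | zero => simp
    | succ m =>
      rw [derivative_X_pow]
      simp only [eval_mul, eval_C, eval_pow, eval_X, Nat.add_sub_cancel]
      field_simp
      ring
  -- second derivative of y i at t
  have hnodup : (y i).roots.Nodup := nodup_roots (PerfectField.separable_iff_squarefree.2 hsf)
  have hyy : eval t (derivative (derivative (y i))) =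
      2 * eval t (derivative (y i)) * Sres y i t := by
    have hsplit := (IsAlgClosed.splits (y i)).eq_prod_roots_of_monic hmon
    have hcons : (y i).roots = t ::ₘ (y i).roots.erase t := (Multiset.cons_erase ht).symm
    set u : ℂ[X] := (((y i).roots.erase t).map (fun r => X - C r)).prod with hu
    have hyu : y i = (X - C t) * u := by
      rw [hsplit]
      conv_lhs => rw [hcons]
      rw [Multiset.map_cons, Multiset.prod_cons]
    have hrt : ∀ r ∈ (y i).roots.erase t, r ≠ t := by
      intro r hr he
      exact (hnodup.notMem_erase (he ▸ hr))
    have hut := S15aux.eval_derivative_multiset ((y i).roots.erase t) t hrt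
    rw [← hu] at hut
    have hSi : Sres y i t = (((y i).roots.erase t).map fun r => (t - r)⁻¹).sum := by
      rw [Sres]
      congr 2
      rw [hnodup.erase_eq_filter t]
    have hd1 : derivative (y i) = u + (X - C t) * derivative u := by
      rw [hyu, derivative_mul]
      simp only [derivative_sub, derivative_X, derivative_C, sub_zero, one_mul]
    have hd2 : derivative (derivative (y i)) =
        derivative u + (derivative u + (X - C t) * derivative (derivative u)) := by
      rw [hd1, derivative_add, derivative_mul]
      simp only [derivative_sub, derivative_X, derivative_C, sub_zero, one_mul]
    rw [hd2, hd1, hSi]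
    simp only [eval_add, eval_mul, eval_sub, eval_X, eval_C, sub_self, zero_mul, add_zero]
    rw [hut]
    ring
  -- the Bethe equation at t
  have hbe := hbethe i t ht
  rw [hn0] at hbe
  rw [← Finset.add_sum_erase _ _ (Finset.mem_univ i), haii i,
    show (((2 : ℤ) : ℂ)) = 2 from by norm_num] at hbe
  -- swap the order of summation in hB
  have hcomm : (∑ s : Fin N, ∑ k ∈ Finset.range M,
        ((lam s ((σ⁻¹ ^ k) i) : ℕ) : ℂ) * (t - ω ^ k * z s)⁻¹) =
      ∑ k ∈ Finset.range M, ∑ s : Fin N,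
        ((lam s ((σ⁻¹ ^ k) i) : ℕ) : ℂ) / (t - ω ^ k * z s) := by
    rw [Finset.sum_comm]
    refine Finset.sum_congr rfl fun k _ => Finset.sum_congr rfl fun s _ => ?_
    rw [div_eq_mul_inv]
  have hLC : (∑ j ∈ Finset.univ.erase i, (((-(a i j)).toNat : ℕ) : ℂ) * Sres y j t) =
      - ∑ j ∈ Finset.univ.erase i, ((a i j : ℤ) : ℂ) * Sres y j t := by
    rw [← Finset.sum_neg_distrib]
    refine Finset.sum_congr rfl fun j hj => ?_
    have hji : j ≠ i := (Finset.mem_erase.1 hj).1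
    have hle := haneg i j hji.symm
    have : (((-(a i j)).toNat : ℤ) : ℂ) = -((a i j : ℤ) : ℂ) := by
      rw [Int.toNat_of_nonneg (neg_nonneg.2 hle)]
      push_cast
      ring
    push_cast at this ⊢
    rw [this]
    ring
  have key : ((n0 : ℂ) * t⁻¹) +
      (∑ s : Fin N, ∑ k ∈ Finset.range M,
        ((lam s ((σ⁻¹ ^ k) i) : ℕ) : ℂ) * (t - ω ^ k * z s)⁻¹) +
      (∑ j ∈ Finset.univ.erase i, (((-(a i j)).toNat : ℕ) : ℂ) * Sres y j t) =
      2 * Sres y i t := by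
    rw [hcomm, hLC]
    have hdiv : (n0 : ℂ) * t⁻¹ = (n0 : ℂ) / t := (div_eq_mul_inv _ _).symm
    rw [hdiv]
    linear_combination hbe
  rw [derivative_mul, derivative_mul]
  simp only [eval_add, eval_mul]
  rw [hA, hB, hC, hyy]
  linear_combination (eval t (X ^ n0 : ℂ[X]) * eval t (Tpoly σ M ω z lam i) *
    eval t (∏ j ∈ Finset.univ.erase i, (y j) ^ ((-(a i j)).toNat)) *
    eval t (derivative (y i))) * key
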